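/- (Corollary: pinching implies positivity of the second-kind curvature.) Let α > 0. If α(‖X‖²‖Y‖² − ⟨X,Y⟩²) ≤ R(X,Y,X,Y) < (n/(n−1)) α (‖X‖²‖Y‖² − ⟨X,Y⟩²) for all linearly independent X,Y ∈ E, then Q̊(φ) > 0 for every nonzero traceless symmetric bilinear form φ on E. If instead α(‖X‖²‖Y‖² − ⟨X,Y⟩²) ≤ R(X,Y,X,Y) ≤ (n/(n−1)) α (‖X‖²‖Y‖² − ⟨X,Y⟩²) for all X,Y ∈ E, then Q̊(φ) ≥ 0 for every traceless symmetric bilinear form φ on E. -/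

import Mathlib

open scoped RealInnerProductSpace

section Aux

variable {E : Type*} [NormedAddCommGroup E] [InnerProductSpace ℝ E] {n : ℕ}

lemma aux_contract (b : OrthonormalBasis (Fin n) ℝ E) (ψ : E →ₗ[ℝ] ℝ) (v : E) :
    ∑ l, ψ (b l) * ⟪v, b l⟫ = ψ v := by
  conv_rhs => rw [← b.sum_repr v]
  rw [map_sum]
  refine Finset.sum_congr rfl fun l _ => ?_
  rw [map_smul, smul_eq_mul, b.repr_apply_apply, real_inner_comm, mul_comm]

lemma aux_sum_diag (e f : OrthonormalBasis (Fin n) ℝ E) (D : E → E → ℝ)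
    (h1 : ∀ y, IsLinearMap ℝ (fun x => D x y))
    (h2 : ∀ x, IsLinearMap ℝ (fun y => D x y)) :
    ∑ i, D (e i) (e i) = ∑ i, D (f i) (f i) := by
  have key : ∀ i, D (e i) (e i) = ∑ p, f.repr (e i) p * D (e i) (f p) := by
    intro i
    set L : E →ₗ[ℝ] ℝ := IsLinearMap.mk' _ (h2 (e i)) with hLdef
    calc D (e i) (e i) = L (∑ p, f.repr (e i) p • f p) :=
          (congrArg L (f.sum_repr (e i))).symm
      _ = ∑ p, f.repr (e i) p * L (f p) := by
          rw [map_sum]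
          exact Finset.sum_congr rfl fun p _ => by rw [map_smul, smul_eq_mul]
      _ = ∑ p, f.repr (e i) p * D (e i) (f p) := rfl
  have key2 : ∀ p, D (f p) (f p) = ∑ i, f.repr (e i) p * D (e i) (f p) := by
    intro p
    set L : E →ₗ[ℝ] ℝ := IsLinearMap.mk' _ (h1 (f p)) with hLdef
    calc D (f p) (f p) = L (∑ i, e.repr (f p) i • e i) :=
          (congrArg L (e.sum_repr (f p))).symm
      _ = ∑ i, f.repr (e i) p * L (e i) := by
          rw [map_sum]
          refine Finset.sum_congr rfl fun i _ => ?_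
          rw [map_smul, smul_eq_mul, e.repr_apply_apply, f.repr_apply_apply,
            real_inner_comm]
      _ = ∑ i, f.repr (e i) p * D (e i) (f p) := rfl
  calc ∑ i, D (e i) (e i) = ∑ i, ∑ p, f.repr (e i) p * D (e i) (f p) :=
        Finset.sum_congr rfl fun i _ => key i
    _ = ∑ p, ∑ i, f.repr (e i) p * D (e i) (f p) := Finset.sum_comm
    _ = ∑ p, D (f p) (f p) := Finset.sum_congr rfl fun p _ => (key2 p).symm

lemma aux_li {X Y : E} (hXY : ⟪X, Y⟫ = 0) (hX : ‖X‖ = 1) (hY : ‖Y‖ = 1) :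
    LinearIndependent ℝ ![X, Y] := by
  rw [LinearIndependent.pair_iff]
  intro s t hst
  have h1 := congrArg (fun z => ⟪X, z⟫) hst
  have h2 := congrArg (fun z => ⟪Y, z⟫) hst
  have hYX : ⟪Y, X⟫ = 0 := by rw [real_inner_comm]; exact hXY
  simp only [inner_add_right, real_inner_smul_right, inner_zero_right,
    real_inner_self_eq_norm_sq, hX, hY, hXY, hYX] at h1 h2
  constructor <;> nlinarith [h1, h2]

end Aux

lemma aux_scalar {n : ℕ} (hn : 2 ≤ n) (α : ℝ) (hα : 0 < α)
    (μ : Fin n → ℝ) (S : Fin n → Fin n → ℝ)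
    (hdiag : ∀ i, S i i = 0)
    (hlow : ∀ i k, i ≠ k → α ≤ S i k)
    (hhigh : ∀ i k, i ≠ k → S i k ≤ ((n : ℝ)/((n : ℝ)-1)) * α)
    (htr : ∑ i, μ i = 0) :
    (α/((n : ℝ)-1)) * ∑ i, (μ i)^2 ≤ ∑ i, ∑ k, -(S i k) * (μ i * μ k) := by
  have hn2 : (2:ℝ) ≤ (n:ℝ) := by exact_mod_cast hn
  have hc0 : (0:ℝ) < (n:ℝ) - 1 := by linarith
  set C : ℝ := (n:ℝ)/((n:ℝ)-1) with hC
  have hne : (n:ℝ) - 1 ≠ 0 := by linarith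
  have hC1 : C - 1 = 1/((n:ℝ)-1) := by
    rw [hC, div_sub_one hne]
    norm_num
  have hCpos : (0:ℝ) < C - 1 := by rw [hC1]; positivity
  have hzero : ∑ i, ∑ k, μ i * μ k = 0 := by
    rw [← Fintype.sum_mul_sum, htr, mul_zero]
  have step1 : ∑ i, ∑ k, -(S i k) * (μ i * μ k)
      = ∑ i, ∑ k, (if i = k then C*α*(μ i)^2 else (C*α - S i k)*(μ i * μ k)) := by
    have hpt : ∀ i k : Fin n, -(S i k) * (μ i * μ k)
        = (if i = k then C*α*(μ i)^2 else (C*α - S i k)*(μ i * μ k)) - C*α*(μ i * μ k) := by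
      intro i k
      by_cases h : i = k
      · subst h; simp [hdiag i]; ring
      · simp only [h, if_false]; ring
    calc ∑ i, ∑ k, -(S i k) * (μ i * μ k)
        = ∑ i, ∑ k, ((if i = k then C*α*(μ i)^2 else (C*α - S i k)*(μ i * μ k)) - C*α*(μ i * μ k)) := by
          exact Finset.sum_congr rfl fun i _ => Finset.sum_congr rfl fun k _ => hpt i k
      _ = (∑ i, ∑ k, (if i = k then C*α*(μ i)^2 else (C*α - S i k)*(μ i * μ k)))
            - C*α*(∑ i, ∑ k, μ i * μ k) := by
          rw [Finset.mul_sum]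
          rw [← Finset.sum_sub_distrib]
          refine Finset.sum_congr rfl fun i _ => ?_
          rw [Finset.mul_sum, ← Finset.sum_sub_distrib]
      _ = _ := by rw [hzero, mul_zero, sub_zero]
  have step2 : ∑ i, ∑ k, (if i = k then C*α*(μ i)^2 else -((C-1)*α)*(|μ i| * |μ k|))
      ≤ ∑ i, ∑ k, (if i = k then C*α*(μ i)^2 else (C*α - S i k)*(μ i * μ k)) := by
    refine Finset.sum_le_sum fun i _ => Finset.sum_le_sum fun k _ => ?_
    by_cases h : i = k
    · simp [h]
    · simp only [h, if_false]
      have h1 : α ≤ S i k := hlow i k h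
      have h2 : S i k ≤ C * α := hhigh i k h
      have h3 : 0 ≤ C*α - S i k := by linarith
      have h4 : C*α - S i k ≤ (C-1)*α := by linarith
      have h5 : -( |μ i| * |μ k| ) ≤ μ i * μ k := by
        rw [← abs_mul]; exact neg_abs_le _
      have h6 : (0:ℝ) ≤ |μ i| * |μ k| := by positivity
      nlinarith [mul_nonneg h3 (by linarith : (0:ℝ) ≤ μ i * μ k + |μ i| * |μ k|),
        mul_nonneg (by linarith : (0:ℝ) ≤ (C-1)*α - (C*α - S i k)) h6]
  have step3 : ∑ i, ∑ k, (if i = k then C*α*(μ i)^2 else -((C-1)*α)*(|μ i| * |μ k|))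
      = -((C-1)*α) * (∑ i, |μ i|)^2 + (C*α + (C-1)*α) * ∑ i, (μ i)^2 := by
    have hpt : ∀ i k : Fin n, (if i = k then C*α*(μ i)^2 else -((C-1)*α)*(|μ i| * |μ k|))
        = -((C-1)*α)*(|μ i| * |μ k|) + (if i = k then (C*α + (C-1)*α)*(μ i)^2 else 0) := by
      intro i k
      by_cases h : i = k
      · subst h
        have habs : |μ i| * |μ i| = (μ i)^2 := by rw [abs_mul_abs_self]; ring
        rw [if_pos rfl, if_pos rfl, habs]; ring
      · simp [h]
    calc ∑ i, ∑ k, (if i = k then C*α*(μ i)^2 else -((C-1)*α)*(|μ i| * |μ k|))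
        = ∑ i, ∑ k, (-((C-1)*α)*(|μ i| * |μ k|) + (if i = k then (C*α + (C-1)*α)*(μ i)^2 else 0)) :=
          Finset.sum_congr rfl fun i _ => Finset.sum_congr rfl fun k _ => hpt i k
      _ = (∑ i, ∑ k, -((C-1)*α)*(|μ i| * |μ k|))
            + ∑ i, ∑ k, (if i = k then (C*α + (C-1)*α)*(μ i)^2 else 0) := by
          simp only [Finset.sum_add_distrib]
      _ = -((C-1)*α) * (∑ i, |μ i|)^2 + (C*α + (C-1)*α) * ∑ i, (μ i)^2 := by
          have h1 : ∑ i, ∑ k, -((C-1)*α)*(|μ i| * |μ k|)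
              = -((C-1)*α) * (∑ i, |μ i|)^2 := by
            symm
            rw [sq, Fintype.sum_mul_sum, Finset.mul_sum]
            refine Finset.sum_congr rfl fun i _ => ?_
            rw [Finset.mul_sum]
          have h2 : (∑ i, ∑ k, (if i = k then (C*α + (C-1)*α)*(μ i)^2 else 0))
              = (C*α + (C-1)*α) * ∑ i, (μ i)^2 := by
            rw [Finset.mul_sum]
            refine Finset.sum_congr rfl fun i _ => ?_
            rw [Finset.sum_ite_eq]
            simp
          rw [h1, h2]
  have cs : (∑ i, |μ i|)^2 ≤ (n:ℝ) * ∑ i, (μ i)^2 := by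
    have := sq_sum_le_card_mul_sum_sq (s := (Finset.univ : Finset (Fin n))) (f := fun i => |μ i|)
    simp only [Finset.card_univ, Fintype.card_fin, sq_abs] at this
    exact_mod_cast this
  have hsq : (0:ℝ) ≤ ∑ i, (μ i)^2 := Finset.sum_nonneg fun i _ => sq_nonneg _
  rw [step1]
  refine le_trans ?_ step2
  rw [step3]
  have hCA : 0 ≤ (C-1)*α := by positivity
  have key : -((C-1)*α) * (∑ i, |μ i|)^2 ≥ -((C-1)*α) * ((n:ℝ) * ∑ i, (μ i)^2) := by
    apply mul_le_mul_of_nonpos_left cs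
    linarith
  have coeff : -((C-1)*α) * ((n:ℝ) * ∑ i, (μ i)^2) + (C*α + (C-1)*α) * ∑ i, (μ i)^2
      = (α/((n:ℝ)-1)) * ∑ i, (μ i)^2 := by
    have : -((C-1)*α) * (n:ℝ) + (C*α + (C-1)*α) = α/((n:ℝ)-1) := by
      rw [hC]; field_simp; ring
    rw [← this]; ring
  linarith

lemma aux_main {E : Type*} [NormedAddCommGroup E] [InnerProductSpace ℝ E]
    {n : ℕ} (hn : 2 ≤ n) (e : OrthonormalBasis (Fin n) ℝ E)
    (R : E →ₗ[ℝ] E →ₗ[ℝ] E →ₗ[ℝ] E →ₗ[ℝ] ℝ)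
    (hR1 : ∀ X Y Z W : E, R X Y Z W = - R Y X Z W)
    (hR2 : ∀ X Y Z W : E, R X Y Z W = - R X Y W Z)
    (α : ℝ) (hα : 0 < α)
    (hpinch : ∀ X Y : E, ⟪X, Y⟫ = 0 → ‖X‖ = 1 → ‖Y‖ = 1 →
      α ≤ R X Y X Y ∧ R X Y X Y ≤ ((n : ℝ)/((n : ℝ)-1)) * α)
    (φ : E →ₗ[ℝ] E →ₗ[ℝ] ℝ) (hsym : ∀ X Y : E, φ X Y = φ Y X)
    (htr : (∑ i, φ (e i) (e i)) = 0) :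
    0 ≤ ∑ i, ∑ j, ∑ k, ∑ l, R (e i) (e k) (e l) (e j) * φ (e k) (e l) * φ (e i) (e j) ∧
    (φ ≠ 0 →
      0 < ∑ i, ∑ j, ∑ k, ∑ l, R (e i) (e k) (e l) (e j) * φ (e k) (e l) * φ (e i) (e j)) := by
  classical
  have hn2 : (2:ℝ) ≤ (n:ℝ) := by exact_mod_cast hn
  have hc0 : (0:ℝ) < (n:ℝ) - 1 := by linarith
  haveI : FiniteDimensional ℝ E := Module.Finite.of_basis e.toBasis
  have hfr : Module.finrank ℝ E = n := by
    rw [Module.finrank_eq_card_basis e.toBasis, Fintype.card_fin]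
  let A : E →ₗ[ℝ] E :=
    { toFun := fun X =>
        (InnerProductSpace.toDual ℝ E).symm (LinearMap.toContinuousLinearMap (φ X))
      map_add' := fun x y => by simp [map_add]
      map_smul' := fun c x => by simp [map_smul] }
  have hA : ∀ X Y : E, ⟪A X, Y⟫ = φ X Y := by
    intro X Y
    exact InnerProductSpace.toDual_symm_apply
  have hAsym : A.IsSymmetric := by
    intro X Y
    rw [hA X Y, real_inner_comm, hA Y X]
    exact hsym X Y
  set f : OrthonormalBasis (Fin n) ℝ E := hAsym.eigenvectorBasis hfr with hf
  set μ : Fin n → ℝ := hAsym.eigenvalues hfr with hμ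
  have hAf : ∀ i, A (f i) = μ i • f i := fun i => hAsym.apply_eigenvectorBasis hfr i
  have hnorm : ∀ i, ‖f i‖ = 1 := f.orthonormal.1
  have hinner : ∀ i k, i ≠ k → ⟪f i, f k⟫ = 0 := fun i k h => f.orthonormal.2 h
  have hφf : ∀ k l, φ (f k) (f l) = if k = l then μ k else 0 := by
    intro k l
    rw [← hA, hAf, real_inner_smul_left]
    by_cases h : k = l
    · subst h; rw [real_inner_self_eq_norm_sq, hnorm]; simp
    · rw [hinner k l h]; simp [h]
  -- bilinearity of some maps
  have hφ1 : ∀ y : E, IsLinearMap ℝ (fun x => φ x y) :=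
    fun y => ⟨fun a b => by simp, fun c a => by simp⟩
  have hφ2 : ∀ x : E, IsLinearMap ℝ (fun y => φ x y) :=
    fun x => ⟨fun a b => by simp, fun c a => by simp⟩
  have htrμ : ∑ i, μ i = 0 := by
    have h1 : ∀ i, μ i = φ (f i) (f i) := fun i => by rw [hφf]; simp
    calc ∑ i, μ i = ∑ i, φ (f i) (f i) := Finset.sum_congr rfl fun i _ => h1 i
      _ = ∑ i, φ (e i) (e i) := aux_sum_diag f e (fun x y => φ x y) hφ1 hφ2
      _ = 0 := htr
  set S : Fin n → Fin n → ℝ := fun i k => R (f i) (f k) (f i) (f k) with hS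
  have hdiag : ∀ i, S i i = 0 := by
    intro i
    have := hR1 (f i) (f i) (f i) (f i)
    simp only [hS]
    linarith
  have hlow : ∀ i k, i ≠ k → α ≤ S i k :=
    fun i k h => (hpinch (f i) (f k) (hinner i k h) (hnorm i) (hnorm k)).1
  have hhigh : ∀ i k, i ≠ k → S i k ≤ ((n : ℝ)/((n : ℝ)-1)) * α :=
    fun i k h => (hpinch (f i) (f k) (hinner i k h) (hnorm i) (hnorm k)).2
  -- rewrite the quadruple sum
  have Qrw : ∀ b : OrthonormalBasis (Fin n) ℝ E,
      ∑ i, ∑ j, ∑ k, ∑ l, R (b i) (b k) (b l) (b j) * φ (b k) (b l) * φ (b i) (b j)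
      = ∑ i, ∑ k, R (b i) (b k) (A (b k)) (A (b i)) := by
    intro b
    have hl : ∀ i j k : Fin n,
        ∑ l, R (b i) (b k) (b l) (b j) * φ (b k) (b l) * φ (b i) (b j)
        = R (b i) (b k) (A (b k)) (b j) * φ (b i) (b j) := by
      intro i j k
      rw [← Finset.sum_mul]
      congr 1
      calc ∑ l, R (b i) (b k) (b l) (b j) * φ (b k) (b l)
          = ∑ l, ((R (b i) (b k)).flip (b j)) (b l) * ⟪A (b k), b l⟫ := by
            refine Finset.sum_congr rfl fun l _ => ?_
            rw [hA]
            rfl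
        _ = ((R (b i) (b k)).flip (b j)) (A (b k)) :=
            aux_contract b ((R (b i) (b k)).flip (b j)) (A (b k))
        _ = R (b i) (b k) (A (b k)) (b j) := rfl
    have hj : ∀ i k : Fin n,
        ∑ j, R (b i) (b k) (A (b k)) (b j) * φ (b i) (b j)
        = R (b i) (b k) (A (b k)) (A (b i)) := by
      intro i k
      calc ∑ j, R (b i) (b k) (A (b k)) (b j) * φ (b i) (b j)
          = ∑ j, ((R (b i) (b k)) (A (b k))) (b j) * ⟪A (b i), b j⟫ := by
            refine Finset.sum_congr rfl fun j _ => ?_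
            rw [hA]
        _ = R (b i) (b k) (A (b k)) (A (b i)) :=
            aux_contract b ((R (b i) (b k)) (A (b k))) (A (b i))
    calc ∑ i, ∑ j, ∑ k, ∑ l, R (b i) (b k) (b l) (b j) * φ (b k) (b l) * φ (b i) (b j)
        = ∑ i, ∑ j, ∑ k, R (b i) (b k) (A (b k)) (b j) * φ (b i) (b j) :=
          Finset.sum_congr rfl fun i _ => Finset.sum_congr rfl fun j _ =>
            Finset.sum_congr rfl fun k _ => hl i j k
      _ = ∑ i, ∑ k, ∑ j, R (b i) (b k) (A (b k)) (b j) * φ (b i) (b j) :=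
          Finset.sum_congr rfl fun i _ => Finset.sum_comm
      _ = ∑ i, ∑ k, R (b i) (b k) (A (b k)) (A (b i)) :=
          Finset.sum_congr rfl fun i _ => Finset.sum_congr rfl fun k _ => hj i k
  have hinv : ∑ i, ∑ k, R (e i) (e k) (A (e k)) (A (e i))
      = ∑ i, ∑ k, R (f i) (f k) (A (f k)) (A (f i)) := by
    have step1 : ∀ x : E, ∑ k, R x (e k) (A (e k)) (A x) = ∑ k, R x (f k) (A (f k)) (A x) := by
      intro x
      exact aux_sum_diag e f (fun u v => R x u (A v) (A x))
        (fun v => ⟨fun a b => by simp, fun c a => by simp⟩)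
        (fun u => ⟨fun a b => by simp, fun c a => by simp⟩)
    have step2 : ∑ i, ∑ k, R (e i) (f k) (A (f k)) (A (e i))
        = ∑ i, ∑ k, R (f i) (f k) (A (f k)) (A (f i)) := by
      exact aux_sum_diag e f (fun u v => ∑ k, R u (f k) (A (f k)) (A v))
        (fun v => ⟨fun a b => by simp [Finset.sum_add_distrib],
          fun c a => by simp [Finset.mul_sum]⟩)
        (fun u => ⟨fun a b => by simp [Finset.sum_add_distrib],
          fun c a => by simp [Finset.mul_sum]⟩)
    rw [← step2]
    exact Finset.sum_congr rfl fun i _ => step1 (e i)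
  have hval : ∀ i k, R (f i) (f k) (A (f k)) (A (f i)) = -(S i k) * (μ i * μ k) := by
    intro i k
    have hrw : R (f i) (f k) (f k) (f i) = - S i k := hR2 (f i) (f k) (f k) (f i)
    rw [hAf, hAf]
    simp only [map_smul, LinearMap.smul_apply, smul_eq_mul]
    rw [hrw]
    ring
  have hQ : ∑ i, ∑ j, ∑ k, ∑ l, R (e i) (e k) (e l) (e j) * φ (e k) (e l) * φ (e i) (e j)
      = ∑ i, ∑ k, -(S i k) * (μ i * μ k) := by
    rw [Qrw e, hinv]
    exact Finset.sum_congr rfl fun i _ => Finset.sum_congr rfl fun k _ => hval i k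
  have hmain := aux_scalar hn α hα μ S hdiag hlow hhigh htrμ
  have hsq : (0:ℝ) ≤ ∑ i, (μ i)^2 := Finset.sum_nonneg fun i _ => sq_nonneg _
  have hcoef : (0:ℝ) < α/((n:ℝ)-1) := by positivity
  constructor
  · rw [hQ]
    exact le_trans (mul_nonneg (le_of_lt hcoef) hsq) hmain
  · intro hne
    rw [hQ]
    have hex : ∃ j, μ j ≠ 0 := by
      by_contra hall
      push_neg at hall
      apply hne
      have hA0 : ∀ X : E, A X = 0 := by
        intro X
        have h1 : ∀ i, A (f i) = 0 := fun i => by rw [hAf, hall i, zero_smul]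
        conv_lhs => rw [← f.sum_repr X]
        rw [map_sum]
        simp [h1]
      ext X Y
      rw [← hA, hA0]
      simp
    obtain ⟨j, hj⟩ := hex
    have hpos : 0 < ∑ i, (μ i)^2 := by
      have h1 : 0 < (μ j)^2 := by positivity
      have h2 : (μ j)^2 ≤ ∑ i, (μ i)^2 :=
        Finset.single_le_sum (fun i _ => sq_nonneg (μ i)) (Finset.mem_univ j)
      linarith
    exact lt_of_lt_of_le (mul_pos hcoef hpos) hmain

/-- **pinching implies positivity of the second-kind curvature.**
Let `α > 0`.  If `α(‖X‖²‖Y‖² − ⟪X,Y⟫²) ≤ R(X,Y,X,Y) < (n/(n−1)) α (‖X‖²‖Y‖² − ⟪X,Y⟫²)`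
for all linearly independent `X, Y`, then `Q̊(φ) > 0` for every nonzero traceless
symmetric bilinear form `φ`; if instead the non-strict inequalities hold for all `X, Y`,
then `Q̊(φ) ≥ 0` for every traceless symmetric bilinear form `φ`. -/
theorem stmt_5
    {E : Type*} [NormedAddCommGroup E] [InnerProductSpace ℝ E]
    {n : ℕ} (hn : 2 ≤ n) (e : OrthonormalBasis (Fin n) ℝ E)
    (R : E →ₗ[ℝ] E →ₗ[ℝ] E →ₗ[ℝ] E →ₗ[ℝ] ℝ)
    (hR1 : ∀ X Y Z W : E, R X Y Z W = - R Y X Z W)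
    (hR2 : ∀ X Y Z W : E, R X Y Z W = - R X Y W Z)
    (hR3 : ∀ X Y Z W : E, R X Y Z W = R Z W X Y)
    (hR4 : ∀ X Y Z W : E, R X Y Z W + R Y Z X W + R Z X Y W = 0)
    (α : ℝ) (hα : 0 < α) :
    ((∀ X Y : E, LinearIndependent ℝ ![X, Y] →
        α * (‖X‖ ^ 2 * ‖Y‖ ^ 2 - ⟪X, Y⟫ ^ 2) ≤ R X Y X Y ∧
        R X Y X Y < ((n : ℝ) / ((n : ℝ) - 1)) * α * (‖X‖ ^ 2 * ‖Y‖ ^ 2 - ⟪X, Y⟫ ^ 2)) →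
      ∀ φ : E →ₗ[ℝ] E →ₗ[ℝ] ℝ, (∀ X Y : E, φ X Y = φ Y X) →
        (∑ i, φ (e i) (e i)) = 0 → φ ≠ 0 →
        0 < ∑ i, ∑ j, ∑ k, ∑ l, R (e i) (e k) (e l) (e j) * φ (e k) (e l) * φ (e i) (e j)) ∧
    ((∀ X Y : E,
        α * (‖X‖ ^ 2 * ‖Y‖ ^ 2 - ⟪X, Y⟫ ^ 2) ≤ R X Y X Y ∧
        R X Y X Y ≤ ((n : ℝ) / ((n : ℝ) - 1)) * α * (‖X‖ ^ 2 * ‖Y‖ ^ 2 - ⟪X, Y⟫ ^ 2)) →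
      ∀ φ : E →ₗ[ℝ] E →ₗ[ℝ] ℝ, (∀ X Y : E, φ X Y = φ Y X) →
        (∑ i, φ (e i) (e i)) = 0 →
        0 ≤ ∑ i, ∑ j, ∑ k, ∑ l, R (e i) (e k) (e l) (e j) * φ (e k) (e l) * φ (e i) (e j)) := by
  constructor
  · intro hyp φ hsym htr hne
    have hpinch : ∀ X Y : E, ⟪X, Y⟫ = 0 → ‖X‖ = 1 → ‖Y‖ = 1 →
        α ≤ R X Y X Y ∧ R X Y X Y ≤ ((n : ℝ)/((n : ℝ)-1)) * α := by
      intro X Y hXY hX hY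
      obtain ⟨h1, h2⟩ := hyp X Y (aux_li hXY hX hY)
      rw [hX, hY, hXY] at h1 h2
      norm_num at h1 h2
      exact ⟨h1, le_of_lt h2⟩
    exact (aux_main hn e R hR1 hR2 α hα hpinch φ hsym htr).2 hne
  · intro hyp φ hsym htr
    have hpinch : ∀ X Y : E, ⟪X, Y⟫ = 0 → ‖X‖ = 1 → ‖Y‖ = 1 →
        α ≤ R X Y X Y ∧ R X Y X Y ≤ ((n : ℝ)/((n : ℝ)-1)) * α := by
      intro X Y hXY hX hY
      obtain ⟨h1, h2⟩ := hyp X Y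
      rw [hX, hY, hXY] at h1 h2
      norm_num at h1 h2
      exact ⟨h1, h2⟩
    exact (aux_main hn e R hR1 hR2 α hα hpinch φ hsym htr).1
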